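/- Critical ratio limit via renewal decomposition: let A be the adjacency matrix of a d-regular graph G with transient SRW, o a fixed vertex, σ = σ* = d/f_{oo}(1/d), and H = A + σ1_o1_o*. Writing q_{xo}(k) for the probability that SRW from x first hits o at time k and h(l) = (H^l)_{oo}/d^l, one has (H^n)_{ox}/d^n = ∑_{k+l=n} q_{xo}(k) h(l), and if ∑_l h(l) = ∞ then (∑_{k=0}^{n-1}(H^k)_{ox}/d^k) / (∑_{k=0}^{n-1} h(k)) → ∑_{l=0}^∞ q_{xo}(l) = f_{ox}(1/d)/f_{oo}(1/d) as n → ∞. -/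

import Mathlib

open Filter Topology Classical

open Classical in
noncomputable def matPow {V : Type*} (M : V → V → ℝ) : ℕ → V → V → ℝ
  | 0 => fun x y => if x = y then 1 else 0
  | n+1 => fun x y => ∑' z, M x z * matPow M n z y

open Classical in
/-- The matrix `A` with the row and column of `o` removed (used to count walks avoiding
`o`). -/
noncomputable def avoidMat {V : Type*} (A : V → V → ℝ) (o : V) : V → V → ℝ :=
  fun x y => if x = o ∨ y = o then 0 else A x y

namespace CRRaux
open Function

variable {V : Type*}

lemma summable_fin {ι : Type*} {f : ι → ℝ} (h : (support f).Finite) : Summable f :=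
  summable_of_ne_finset_zero (s := h.toFinset) (fun b hb => by
    by_contra h'; exact hb (h.mem_toFinset.2 h'))

lemma matPow_zero (M : V → V → ℝ) (x y : V) :
    matPow M 0 x y = if x = y then 1 else 0 := rfl

lemma matPow_succ (M : V → V → ℝ) (n : ℕ) (x y : V) :
    matPow M (n+1) x y = ∑' z, M x z * matPow M n z y := rfl

lemma matPow_support {M : V → V → ℝ} (hM : ∀ x, (support (M x)).Finite) (n : ℕ) (x : V) :
    (support (matPow M n x)).Finite := by
  induction n generalizing x with
  | zero =>
    apply Set.Finite.subset (Set.finite_singleton x)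
    intro y hy
    rw [mem_support, matPow_zero] at hy
    rcases eq_or_ne x y with h | h
    · simp [h]
    · simp [h] at hy
  | succ n ih =>
    have hsub : support (matPow M (n+1) x) ⊆ ⋃ z ∈ (hM x).toFinset, support (matPow M n z) := by
      intro y hy
      rw [mem_support, matPow_succ] at hy
      by_contra hc
      apply hy
      have hz : ∀ z, M x z * matPow M n z y = 0 := by
        intro z
        by_cases hz0 : M x z = 0
        · simp [hz0]
        · have hzs : z ∈ (hM x).toFinset := (hM x).mem_toFinset.2 hz0
          have : matPow M n z y = 0 := by
            by_contra h0
            exact hc (Set.mem_biUnion hzs (mem_support.2 h0))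
          simp [this]
      simp [hz]
    exact Set.Finite.subset (Set.Finite.biUnion (hM x).toFinset.finite_toSet
      (fun z _ => ih z)) hsub

lemma matPow_summable {M : V → V → ℝ} (hM : ∀ x, (support (M x)).Finite) (n : ℕ) (x : V) :
    Summable (matPow M n x) := summable_fin (matPow_support hM n x)

lemma summable_mul_left {f g : V → ℝ} (hf : (support f).Finite) :
    Summable (fun z => f z * g z) := by
  apply summable_fin (hf.subset ?_)
  intro z hz
  simp only [mem_support] at hz ⊢
  exact fun h0 => hz (by rw [h0, zero_mul])

lemma tsum_tsum_comm {F : V → V → ℝ} {S T : Set V} (hS : S.Finite) (hT : T.Finite)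
    (h : ∀ z u, F z u ≠ 0 → z ∈ S ∧ u ∈ T) :
    ∑' (z) (u), F z u = ∑' (u) (z), F z u := by
  have hsum : Summable (Function.uncurry F) := by
    apply summable_fin ((hS.prod hT).subset ?_)
    rintro ⟨z, u⟩ hzu
    exact Set.mem_prod.2 (h z u hzu)
  exact (Summable.tsum_comm hsum).symm

lemma matPow_add {M : V → V → ℝ} (hM : ∀ x, (support (M x)).Finite) (m n : ℕ) (x y : V) :
    matPow M (m+n) x y = ∑' z, matPow M m x z * matPow M n z y := by
  induction m generalizing x with
  | zero =>
    rw [Nat.zero_add, tsum_eq_single x]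
    · simp [matPow_zero]
    · intro z hz
      simp [matPow_zero, Ne.symm hz]
  | succ m ih =>
    have h1 : m + 1 + n = (m + n) + 1 := by omega
    rw [h1, matPow_succ]
    have h2 : ∀ z, M x z * matPow M (m+n) z y
        = ∑' u, M x z * (matPow M m z u * matPow M n u y) := by
      intro z
      rw [ih z, tsum_mul_left]
    rw [tsum_congr h2]
    rw [tsum_tsum_comm (hM x) (Set.Finite.biUnion (hM x).toFinset.finite_toSet
        (fun z _ => matPow_support hM m z))
      (fun z u hzu => by
        have hMz : M x z ≠ 0 := fun h0 => hzu (by rw [h0, zero_mul])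
        have hP : matPow M m z u ≠ 0 := fun h0 => hzu (by rw [h0, zero_mul, mul_zero])
        exact ⟨mem_support.2 hMz,
          Set.mem_biUnion (Finset.mem_coe.2 ((hM x).mem_toFinset.2 hMz)) (mem_support.2 hP)⟩)]
    apply tsum_congr
    intro u
    rw [matPow_succ]
    simp only [← mul_assoc]
    rw [tsum_mul_right]

lemma matPow_one (M : V → V → ℝ) (x y : V) : matPow M 1 x y = M x y := by
  rw [matPow_succ, tsum_eq_single y]
  · simp [matPow_zero]
  · intro z hz
    simp [matPow_zero, hz]

lemma matPow_succ' {M : V → V → ℝ} (hM : ∀ x, (support (M x)).Finite) (n : ℕ) (x y : V) :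
    matPow M (n+1) x y = ∑' z, matPow M n x z * M z y := by
  have := matPow_add hM n 1 x y
  simp only [matPow_one] at this
  exact this

lemma matPow_symm {M : V → V → ℝ} (hM : ∀ x, (support (M x)).Finite)
    (hs : ∀ a b, M a b = M b a) (n : ℕ) (x y : V) :
    matPow M n x y = matPow M n y x := by
  induction n generalizing x y with
  | zero => simp [matPow_zero, eq_comm]
  | succ n ih =>
    rw [matPow_succ, matPow_succ' hM]
    exact tsum_congr fun z => by rw [hs x z, ih z y, mul_comm]

lemma matPow_nonneg {M : V → V → ℝ} (h : ∀ a b, 0 ≤ M a b) (n : ℕ) (x y : V) :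
    0 ≤ matPow M n x y := by
  induction n generalizing x with
  | zero => rw [matPow_zero]; split <;> norm_num
  | succ n ih =>
    rw [matPow_succ]
    exact tsum_nonneg fun z => mul_nonneg (h x z) (ih z)

lemma row_sum_pow {M : V → V → ℝ} {d : ℝ} (hM : ∀ x, (support (M x)).Finite)
    (hreg : ∀ x, ∑' y, M x y = d) (n : ℕ) (x : V) :
    ∑' y, matPow M n x y = d ^ n := by
  induction n generalizing x with
  | zero =>
    rw [pow_zero, tsum_eq_single x]
    · simp [matPow_zero]
    · intro z hz; simp [matPow_zero, Ne.symm hz]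
  | succ n ih =>
    have h2 : ∀ y, matPow M (n+1) x y = ∑' z, M x z * matPow M n z y := matPow_succ M n x
    rw [tsum_congr h2]
    rw [tsum_tsum_comm (S := ⋃ z ∈ (hM x).toFinset, support (matPow M n z)) (F := fun y z => M x z * matPow M n z y)
        (Set.Finite.biUnion (hM x).toFinset.finite_toSet (fun z _ => matPow_support hM n z)) (hM x)
        (fun y z hzu => by
          have hMz : M x z ≠ 0 := fun h0 => hzu (by rw [h0, zero_mul])
          have hP : matPow M n z y ≠ 0 := fun h0 => hzu (by rw [h0, mul_zero])
          exact ⟨Set.mem_biUnion (Finset.mem_coe.2 ((hM x).mem_toFinset.2 hMz)) (mem_support.2 hP),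
            mem_support.2 hMz⟩)]
    have h3 : ∀ z : V, ∑' y, M x z * matPow M n z y = M x z * d ^ n := by
      intro z
      rw [tsum_mul_left, ih z]
    rw [tsum_congr h3, tsum_mul_right, hreg, pow_succ, mul_comm]

variable (A : V → V → ℝ) (o : V)

open Classical in
noncomputable def Fc (w : V) (k : ℕ) : ℝ :=
  if k = 0 then 0 else ∑' z, matPow (avoidMat A o) (k-1) w z * A z o

open Classical in
noncomputable def Ret (moo : ℝ) (j : ℕ) : ℝ :=
  if j = 0 then 0 else if j = 1 then moo
  else ∑' z, if z = o then 0 else A o z * Fc A o z (j-1)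

variable {A o}

lemma avoid_row_o (z : V) : avoidMat A o o z = 0 := by simp [avoidMat]

lemma avoid_col_o (z : V) : avoidMat A o z o = 0 := by simp [avoidMat]

lemma avoid_eq {w z : V} (hw : w ≠ o) (hz : z ≠ o) : avoidMat A o w z = A w z := by
  simp [avoidMat, hw, hz]

lemma avoid_support (hloc : ∀ w, (support (A w)).Finite) (w : V) :
    (support (avoidMat A o w)).Finite := by
  apply (hloc w).subset
  intro z hz
  simp only [mem_support] at hz ⊢
  intro h0
  apply hz
  unfold avoidMat
  split
  · rfl
  · exact h0

lemma avoid_nonneg (hAnn : ∀ a b, 0 ≤ A a b) (w z : V) : 0 ≤ avoidMat A o w z := by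
  unfold avoidMat
  split
  · exact le_refl 0
  · exact hAnn w z

lemma matPow_avoid_col_o (hloc : ∀ w, (support (A w)).Finite) :
    ∀ (n : ℕ) (z : V), z ≠ o → matPow (avoidMat A o) n z o = 0 := by
  intro n
  induction n with
  | zero => intro z hz; simp [matPow_zero, hz]
  | succ n ih =>
    intro z hz
    rw [matPow_succ]
    have : ∀ u, avoidMat A o z u * matPow (avoidMat A o) n u o = 0 := by
      intro u
      rcases eq_or_ne u o with h | h
      · rw [h, avoid_col_o, zero_mul]
      · rw [ih u h, mul_zero]
    simp [this]

lemma Fc_zero (w : V) : Fc A o w 0 = 0 := by simp [Fc]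

lemma Fc_one (w : V) : Fc A o w 1 = A w o := by
  rw [Fc]
  norm_num
  rw [tsum_eq_single w]
  · simp [matPow_zero]
  · intro z hz; simp [matPow_zero, Ne.symm hz]

lemma Fc_nonneg (hAnn : ∀ a b, 0 ≤ A a b) (w : V) (k : ℕ) : 0 ≤ Fc A o w k := by
  unfold Fc
  split
  · exact le_refl 0
  · exact tsum_nonneg fun z => mul_nonneg
      (matPow_nonneg (avoid_nonneg hAnn) _ _ _) (hAnn z o)

lemma Fc_step (hloc : ∀ w, (support (A w)).Finite) (w : V) (k : ℕ) :
    ∑' z, avoidMat A o w z * Fc A o z k = if k = 0 then 0 else Fc A o w (k+1) := by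
  set B := avoidMat A o with hB
  have hBloc : ∀ w, (support (B w)).Finite := avoid_support hloc
  rcases Nat.eq_zero_or_pos k with hk | hk
  · simp [hk, Fc_zero]
  · obtain ⟨j, rfl⟩ : ∃ j, k = j + 1 := ⟨k - 1, by omega⟩
    rw [if_neg (Nat.succ_ne_zero j)]
    have h1 : ∀ z, B w z * Fc A o z (j+1)
        = ∑' u, B w z * (matPow B j z u * A u o) := by
      intro z
      rw [Fc, if_neg (Nat.succ_ne_zero j), Nat.add_sub_cancel, tsum_mul_left]
    rw [tsum_congr h1]
    rw [tsum_tsum_comm (hBloc w) (Set.Finite.biUnion (hBloc w).toFinset.finite_toSet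
        (fun z _ => matPow_support hBloc j z))
      (fun z u hzu => by
        have h2 : B w z ≠ 0 := fun h0 => hzu (by rw [h0, zero_mul])
        have h3 : matPow B j z u ≠ 0 := fun h0 => hzu (by rw [h0, zero_mul, mul_zero])
        exact ⟨mem_support.2 h2,
          Set.mem_biUnion (Finset.mem_coe.2 ((hBloc w).mem_toFinset.2 h2)) (mem_support.2 h3)⟩)]
    rw [Fc, if_neg (Nat.succ_ne_zero (j+1)), Nat.add_sub_cancel]
    apply tsum_congr
    intro u
    rw [matPow_succ]
    simp only [← mul_assoc]
    rw [tsum_mul_right]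

lemma renewal_L (hloc : ∀ w, (support (A w)).Finite)
    {M : V → V → ℝ} (hM : ∀ w z, w ≠ o → M w z = A w z) :
    ∀ (n : ℕ) (w : V), w ≠ o → ∀ y,
      matPow M n w y = matPow (avoidMat A o) n w y
        + ∑ k ∈ Finset.range (n+1), Fc A o w k * matPow M (n-k) o y := by
  intro n
  induction n with
  | zero =>
    intro w hw y
    simp [matPow_zero, Fc_zero]
  | succ n ih =>
    intro w hw y
    have hBloc : ∀ w, (support (avoidMat A o w)).Finite := avoid_support hloc
    rw [matPow_succ]
    have key : ∀ z, M w z * matPow M n z y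
        = (if z = o then M w o * matPow M n o y else 0)
          + avoidMat A o w z * (matPow (avoidMat A o) n z y
              + ∑ k ∈ Finset.range (n+1), Fc A o z k * matPow M (n-k) o y) := by
      intro z
      rcases eq_or_ne z o with hz | hz
      · subst hz; rw [if_pos rfl, avoid_col_o, zero_mul, add_zero]
      · rw [if_neg hz, zero_add, avoid_eq hw hz, ← hM w z hw, ← ih z hz y]
    rw [tsum_congr key]
    rw [Summable.tsum_add (summable_of_ne_finset_zero (s := {o}) (fun b hb => if_neg (by simpa using hb)))
        (summable_mul_left (hBloc w))]
    rw [tsum_eq_single o (fun z hz => if_neg hz), if_pos rfl]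
    have key2 : ∀ z, avoidMat A o w z * (matPow (avoidMat A o) n z y
          + ∑ k ∈ Finset.range (n+1), Fc A o z k * matPow M (n-k) o y)
        = avoidMat A o w z * matPow (avoidMat A o) n z y
          + ∑ k ∈ Finset.range (n+1), avoidMat A o w z * (Fc A o z k * matPow M (n-k) o y) := by
      intro z; rw [mul_add, Finset.mul_sum]
    rw [tsum_congr key2]
    rw [Summable.tsum_add (summable_mul_left (hBloc w)) (summable_sum (fun k _ => summable_mul_left (hBloc w)))]
    rw [Summable.tsum_finsetSum (fun k _ => summable_mul_left (hBloc w))]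
    have key3 : ∀ k ∈ Finset.range (n+1), ∑' z, avoidMat A o w z * (Fc A o z k * matPow M (n-k) o y)
        = (if k = 0 then 0 else Fc A o w (k+1)) * matPow M (n-k) o y := by
      intro k _
      have hassoc : ∀ z : V, avoidMat A o w z * (Fc A o z k * matPow M (n-k) o y)
          = (avoidMat A o w z * Fc A o z k) * matPow M (n-k) o y := fun z => by ring
      rw [tsum_congr hassoc, tsum_mul_right, Fc_step hloc]
    rw [Finset.sum_congr rfl key3]
    rw [← matPow_succ]
    rw [hM w o hw, ← Fc_one (A := A) (o := o)]
    rw [Finset.sum_range_succ' (fun k => Fc A o w k * matPow M (n+1-k) o y) (n+1)]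
    rw [Fc_zero, zero_mul, add_zero]
    rw [Finset.sum_range_succ' (fun k => (if k = 0 then 0 else Fc A o w (k+1)) * matPow M (n-k) o y) n]
    rw [Finset.sum_range_succ' (fun k => Fc A o w (k+1) * matPow M (n+1-(k+1)) o y) n]
    simp only [Nat.succ_ne_zero, ite_false, Nat.succ_sub_succ, eq_self_iff_true, ite_true,
      Nat.sub_zero, zero_mul, add_zero]
    ring

lemma Ret_zero (moo : ℝ) : Ret A o moo 0 = 0 := by simp [Ret]

lemma Ret_one (moo : ℝ) : Ret A o moo 1 = moo := by simp [Ret]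

lemma renewal_R (hloc : ∀ w, (support (A w)).Finite)
    {M : V → V → ℝ} (hM : ∀ w z, w ≠ o → M w z = A w z)
    (hMrow : ∀ z, z ≠ o → M o z = A o z) :
    ∀ (n : ℕ),
      matPow M n o o = (if n = 0 then 1 else 0)
        + ∑ j ∈ Finset.range (n+1), Ret A o (M o o) j * matPow M (n-j) o o := by
  intro n
  rcases n with _ | n
  · simp [matPow_zero, Ret_zero]
  · rw [if_neg (Nat.succ_ne_zero n), zero_add, matPow_succ]
    have key : ∀ z, M o z * matPow M n z o
        = (if z = o then M o o * matPow M n o o else 0)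
          + (if z = o then 0 else
              A o z * ∑ k ∈ Finset.range (n+1), Fc A o z k * matPow M (n-k) o o) := by
      intro z
      rcases eq_or_ne z o with hz | hz
      · subst hz; rw [if_pos rfl, if_pos rfl, add_zero]
      · rw [if_neg hz, if_neg hz, zero_add, hMrow z hz]
        congr 1
        rw [renewal_L hloc hM n z hz o, matPow_avoid_col_o hloc n z hz, zero_add]
    rw [tsum_congr key]
    rw [Summable.tsum_add (summable_of_ne_finset_zero (s := {o}) (fun b hb => if_neg (by simpa using hb)))
        (summable_fin ((hloc o).subset (fun z hz => by
          simp only [mem_support] at hz ⊢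
          intro h0
          apply hz
          rw [h0, zero_mul, ite_self])))]
    rw [tsum_eq_single o (fun z hz => if_neg hz), if_pos rfl]
    have key2 : ∀ z : V, (if z = o then 0 else
          A o z * ∑ k ∈ Finset.range (n+1), Fc A o z k * matPow M (n-k) o o)
        = ∑ k ∈ Finset.range (n+1),
            (if z = o then 0 else A o z * Fc A o z k) * matPow M (n-k) o o := by
      intro z
      rcases eq_or_ne z o with hz | hz
      · simp [hz]
      · rw [if_neg hz, Finset.mul_sum]
        exact Finset.sum_congr rfl fun k _ => by rw [if_neg hz]; ring
    rw [tsum_congr key2]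
    rw [Summable.tsum_finsetSum (fun k _ => by
      apply summable_fin ((hloc o).subset ?_)
      intro z hz
      simp only [mem_support] at hz ⊢
      intro h0
      apply hz
      rw [h0, zero_mul, ite_self, zero_mul])]
    have key3 : ∀ k ∈ Finset.range (n+1),
        ∑' z, (if z = o then 0 else A o z * Fc A o z k) * matPow M (n-k) o o
          = (if k = 0 then 0 else Ret A o (M o o) (k+1)) * matPow M (n-k) o o := by
      intro k _
      rw [tsum_mul_right]
      congr 1
      rcases Nat.eq_zero_or_pos k with hk | hk
      · subst hk
        rw [if_pos rfl]
        have : ∀ z : V, (if z = o then 0 else A o z * Fc A o z 0) = 0 := by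
          intro z; rw [Fc_zero, mul_zero, ite_self]
        rw [tsum_congr this, tsum_zero]
      · rw [if_neg (by omega), Ret, if_neg (Nat.succ_ne_zero k), if_neg (by omega),
          Nat.add_sub_cancel]
    rw [Finset.sum_congr rfl key3]
    rw [Finset.sum_range_succ' (fun j => Ret A o (M o o) j * matPow M (n+1-j) o o) (n+1)]
    rw [Ret_zero, zero_mul, add_zero]
    rw [Finset.sum_range_succ' (fun k => (if k = 0 then 0 else Ret A o (M o o) (k+1)) * matPow M (n-k) o o) n]
    rw [Finset.sum_range_succ' (fun k => Ret A o (M o o) (k+1) * matPow M (n+1-(k+1)) o o) n]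
    rw [Ret_one]
    simp only [Nat.succ_ne_zero, ite_false, Nat.succ_sub_succ, eq_self_iff_true, ite_true,
      Nat.sub_zero, zero_mul, add_zero]
    ring

lemma conv_sum (u v : ℕ → ℝ) (N : ℕ) :
    ∑ n ∈ Finset.range N, ∑ j ∈ Finset.range (n+1), u j * v (n-j)
      = ∑ j ∈ Finset.range N, u j * ∑ l ∈ Finset.range (N-j), v l := by
  induction N with
  | zero => simp
  | succ N ih =>
    rw [Finset.sum_range_succ, ih]
    rw [Finset.sum_range_succ (fun j => u j * ∑ l ∈ Finset.range (N+1-j), v l) N]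
    have h1 : ∀ j ∈ Finset.range N, u j * ∑ l ∈ Finset.range (N+1-j), v l
        = u j * ∑ l ∈ Finset.range (N-j), v l + u j * v (N-j) := by
      intro j hj
      have hj' : j < N := Finset.mem_range.1 hj
      have : N + 1 - j = (N - j) + 1 := by omega
      rw [this, Finset.sum_range_succ, mul_add]
    rw [Finset.sum_congr rfl h1, Finset.sum_add_distrib]
    rw [Finset.sum_range_succ (fun j => u j * v (N-j)) N]
    simp only [Nat.sub_self, Nat.add_sub_cancel]
    simp [Finset.sum_range_one]
    ring
end CRRaux

open Classical in
/-- `q_{xo}(k)`: the probability that simple random walk on the `d`-regular graph with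
adjacency `A`, started at `x ≠ o`, hits `o` for the first time at time `k`. -/
noncomputable def firstHit {V : Type*} (A : V → V → ℝ) (d : ℝ) (o x : V) (k : ℕ) : ℝ :=
  if k = 0 then 0 else (∑' z, matPow (avoidMat A o) (k-1) x z * A z o) / d^k

set_option maxHeartbeats 2000000 in
open CRRaux Function in
open Classical in
/-- critical ratio limit via renewal decomposition. Let `G` be `d`-regular
with transient SRW, `σ = σ* = d/f_{oo}(1/d)`, `H = A + σ1_o1_o*`, `h(l) = (H^l)_{oo}/d^l`
and `q_{xo}(k)` the first-hitting probabilities. Then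
`(H^n)_{ox}/d^n = ∑_{k+l=n} q_{xo}(k)h(l)`, and if `∑_l h(l) = ∞` then
`(∑_{k<n}(H^k)_{ox}/d^k)/(∑_{k<n}h(k)) → ∑_l q_{xo}(l) = f_{ox}(1/d)/f_{oo}(1/d)`. -/
theorem critical_renewal_ratio_limit
    {V : Type*} (A : V → V → ℝ) (d : ℝ) (hd : 0 < d)
    (hAsymm : ∀ x y, A x y = A y x)
    (hAnn : ∀ x y, 0 ≤ A x y)
    (hloc : ∀ x, (Function.support (A x)).Finite)
    (hreg : ∀ x, ∑' y, A x y = d)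
    (hconn : ∀ x y : V, ∃ n : ℕ, 0 < matPow A n x y)
    (o x : V) (hx : x ≠ o)
    (htrans : Summable (fun n : ℕ => matPow A n o o / d^n))
    (σ : ℝ) (hσ : σ = d / ∑' n : ℕ, matPow A n o o / d^n)
    (H : V → V → ℝ)
    (hH : H = fun a b => A a b + if a = o ∧ b = o then σ else 0) :
    (∀ n : ℕ, matPow H n o x / d^n
        = ∑ k ∈ Finset.range (n+1),
            firstHit A d o x k * (matPow H (n-k) o o / d^(n-k))) ∧
    (¬ Summable (fun l : ℕ => matPow H l o o / d^l) →
      Summable (firstHit A d o x) ∧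
      Tendsto (fun n : ℕ =>
          (∑ k ∈ Finset.range n, matPow H k o x / d^k)
            / (∑ k ∈ Finset.range n, matPow H k o o / d^k))
        atTop (𝓝 (∑' l : ℕ, firstHit A d o x l)) ∧
      (∑' l : ℕ, firstHit A d o x l)
          = (∑' n : ℕ, matPow A n o x / d^n) / (∑' n : ℕ, matPow A n o o / d^n)) := by
  have hd0 : d ≠ 0 := ne_of_gt hd
  set f : ℝ := ∑' n : ℕ, matPow A n o o / d^n with hfdef
  have ha_nonneg : ∀ n : ℕ, 0 ≤ matPow A n o o / d^n :=
    fun n => div_nonneg (matPow_nonneg hAnn _ _ _) (by positivity)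
  have ha0 : matPow A 0 o o / d^0 = 1 := by simp [matPow_zero]
  have hf1 : 1 ≤ f := by
    rw [← ha0]
    exact Summable.le_tsum htrans 0 (fun j _ => ha_nonneg j)
  have hf0 : f ≠ 0 := by linarith
  have hσ0 : 0 ≤ σ := by rw [hσ]; exact div_nonneg hd.le (by linarith)
  have hHloc : ∀ w, (support (H w)).Finite := by
    intro w
    apply ((hloc w).union (Set.finite_singleton o)).subset
    intro z hz
    simp only [mem_support, hH] at hz
    rcases eq_or_ne z o with h | h
    · exact Or.inr (by simp [h])
    · left
      simp only [mem_support]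
      intro h0
      exact hz (by simp [h0, h])
  have hHnn : ∀ a b, 0 ≤ H a b := by
    intro a b
    rw [hH]
    have := hAnn a b
    dsimp only
    split <;> [linarith; linarith]
  have hHsym : ∀ a b, H a b = H b a := by
    intro a b
    simp only [hH]
    rw [hAsymm]
    congr 1
    simp [and_comm]
  have hHM : ∀ w z, w ≠ o → H w z = A w z := by
    intro w z hw
    simp only [hH]
    rw [if_neg (by tauto), add_zero]
  have hHrow : ∀ z, z ≠ o → H o z = A o z := by
    intro z hz
    simp only [hH]
    rw [if_neg (by tauto), add_zero]
  have hHoo : H o o = A o o + σ := by simp [hH]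
  have hfq : ∀ k, firstHit A d o x k = Fc A o x k / d ^ k := by
    intro k
    unfold firstHit Fc
    rcases eq_or_ne k 0 with h | h
    · simp [h]
    · rw [if_neg h, if_neg h]
  have part1gen : ∀ (M : V → V → ℝ), (∀ w, (support (M w)).Finite)
      → (∀ a b, M a b = M b a) → (∀ w z, w ≠ o → M w z = A w z) →
      ∀ n, matPow M n o x / d^n = ∑ k ∈ Finset.range (n+1),
        firstHit A d o x k * (matPow M (n-k) o o / d^(n-k)) := by
    intro M hMloc hMsym hM n
    have h1 : matPow M n o x = ∑ k ∈ Finset.range (n+1), Fc A o x k * matPow M (n-k) o o := by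
      rw [matPow_symm hMloc hMsym n o x, renewal_L hloc hM n x hx o,
        matPow_avoid_col_o hloc n x hx, zero_add]
    rw [h1, Finset.sum_div]
    apply Finset.sum_congr rfl
    intro k hk
    have hk' : k ≤ n := by
      have := Finset.mem_range.1 hk; omega
    rw [hfq k, div_mul_div_comm, ← pow_add, Nat.add_sub_cancel' hk']
  have part1 := part1gen H hHloc hHsym hHM
  refine ⟨part1, fun hns => ?_⟩
    -- notation
  have hq_nonneg : ∀ k, 0 ≤ firstHit A d o x k := by
    intro k
    rw [hfq]
    exact div_nonneg (Fc_nonneg hAnn x k) (by positivity)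
  have hrow : ∀ (n : ℕ) (w : V), ∑' y, matPow A n w y = d ^ n :=
    fun n w => row_sum_pow hloc hreg n w
  -- summability of q
  have hqsum_le' : ∀ n : ℕ, ∑ k ∈ Finset.range (n+1), firstHit A d o x k ≤ 1 := by
    intro n
    have hL : ∀ y, matPow A n x y = matPow (avoidMat A o) n x y
        + ∑ k ∈ Finset.range (n+1), Fc A o x k * matPow A (n-k) o y :=
      renewal_L hloc (fun _ _ _ => rfl) n x hx
    have hsum2 : ∀ k ∈ Finset.range (n+1),
        Summable (fun y => Fc A o x k * matPow A (n-k) o y) :=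
      fun k _ => (matPow_summable hloc _ o).mul_left _
    have hdn : d ^ n = (∑' y, matPow (avoidMat A o) n x y)
        + ∑ k ∈ Finset.range (n+1), Fc A o x k * d ^ (n-k) := by
      rw [← hrow n x, tsum_congr hL,
        Summable.tsum_add (matPow_summable (avoid_support hloc) n x) (summable_sum hsum2),
        Summable.tsum_finsetSum hsum2]
      congr 1
      exact Finset.sum_congr rfl fun k _ => by rw [tsum_mul_left, hrow]
    have hBn : 0 ≤ ∑' y, matPow (avoidMat A o) n x y :=
      tsum_nonneg fun y => matPow_nonneg (avoid_nonneg hAnn) n x y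
    have hkey : ∑ k ∈ Finset.range (n+1), Fc A o x k * d ^ (n-k) ≤ d ^ n := by linarith
    have heq : ∀ k ∈ Finset.range (n+1),
        firstHit A d o x k = Fc A o x k * d ^ (n-k) / d ^ n := by
      intro k hk
      have hk' : k ≤ n := by have := Finset.mem_range.1 hk; omega
      rw [hfq k, eq_div_iff (by positivity : (0:ℝ) < d^n).ne']
      have hdn' : (d:ℝ) ^ n = d ^ k * d ^ (n-k) := by
        rw [← pow_add, Nat.add_sub_cancel' hk']
      rw [hdn']
      field_simp
    rw [Finset.sum_congr rfl heq, ← Finset.sum_div]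
    rw [div_le_one (by positivity)]
    exact hkey
  have hqsum_le : ∀ N : ℕ, ∑ k ∈ Finset.range N, firstHit A d o x k ≤ 1 := by
    intro N
    calc ∑ k ∈ Finset.range N, firstHit A d o x k
        ≤ ∑ k ∈ Finset.range (N+1), firstHit A d o x k :=
          Finset.sum_le_sum_of_subset_of_nonneg
            (Finset.range_subset_range.2 (Nat.le_succ N)) (fun i _ _ => hq_nonneg i)
      _ ≤ 1 := hqsum_le' N
  have hq_summable : Summable (firstHit A d o x) :=
    summable_of_sum_range_le hq_nonneg hqsum_le
    -- normalized return renewal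
  have renormR : ∀ (M : V → V → ℝ), (∀ w z, w ≠ o → M w z = A w z)
      → (∀ z, z ≠ o → M o z = A o z) →
      ∀ n : ℕ, matPow M n o o / d^n = (if n = 0 then 1 else 0)
        + ∑ j ∈ Finset.range (n+1),
            (Ret A o (M o o) j / d^j) * (matPow M (n-j) o o / d^(n-j)) := by
    intro M hM hMrow n
    rw [renewal_R hloc hM hMrow n, add_div, Finset.sum_div]
    congr 1
    · rcases eq_or_ne n 0 with h | h
      · simp [h]
      · simp [h]
    · apply Finset.sum_congr rfl
      intro j hj
      have hj' : j ≤ n := by have := Finset.mem_range.1 hj; omega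
      rw [div_mul_div_comm, ← pow_add, Nat.add_sub_cancel' hj']
  have hRet_nonneg : ∀ (moo : ℝ), 0 ≤ moo → ∀ j, 0 ≤ Ret A o moo j := by
    intro moo hmoo j
    unfold Ret
    split
    · exact le_refl 0
    split
    · exact hmoo
    · apply tsum_nonneg
      intro z
      split
      · exact le_refl 0
      · exact mul_nonneg (hAnn o z) (Fc_nonneg hAnn z _)
  -- p and its sum
  set p : ℕ → ℝ := fun j => Ret A o (A o o) j / d^j with hpdef
  have hp_nonneg : ∀ j, 0 ≤ p j :=
    fun j => div_nonneg (hRet_nonneg _ (hAnn o o) j) (by positivity)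
  have haren : ∀ n : ℕ, matPow A n o o / d^n = (if n = 0 then 1 else 0)
      + ∑ j ∈ Finset.range (n+1), p j * (matPow A (n-j) o o / d^(n-j)) :=
    renormR A (fun _ _ _ => rfl) (fun _ _ => rfl)
  set SA : ℕ → ℝ := fun N => ∑ n ∈ Finset.range N, matPow A n o o / d^n with hSAdef
  have hSA_le_f : ∀ N, SA N ≤ f := fun N =>
    Summable.sum_le_tsum (Finset.range N) (fun i _ => ha_nonneg i) htrans
  have hSA_mono : ∀ ⦃m n : ℕ⦄, m ≤ n → SA m ≤ SA n := by
    intro m n hmn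
    exact Finset.sum_le_sum_of_subset_of_nonneg (Finset.range_subset_range.2 hmn)
      (fun i _ _ => ha_nonneg i)
  have hSA_ge1 : ∀ N, 1 ≤ N → 1 ≤ SA N := by
    intro N hN
    rw [← ha0]
    exact Finset.single_le_sum (fun i _ => ha_nonneg i) (Finset.mem_range.2 (by omega))
  have hSA_id : ∀ N, SA N = (if N = 0 then 0 else 1)
      + ∑ j ∈ Finset.range N, p j * SA (N - j) := by
    intro N
    have h1 : SA N = ∑ n ∈ Finset.range N, ((if n = 0 then (1:ℝ) else 0)
        + ∑ j ∈ Finset.range (n+1), p j * (matPow A (n-j) o o / d^(n-j))) :=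
      Finset.sum_congr rfl fun n _ => haren n
    rw [h1, Finset.sum_add_distrib, Finset.sum_ite_eq' (Finset.range N) 0 (fun _ => (1:ℝ))]
    congr 1
    · rcases eq_or_ne N 0 with h | h
      · simp [h]
      · simp [Finset.mem_range, h, Nat.pos_of_ne_zero h]
    · exact conv_sum p (fun l => matPow A l o o / d^l) N
  have hpsum_le : ∀ N : ℕ, ∑ j ∈ Finset.range N, p j ≤ f - 1 := by
    intro N
    rcases eq_or_ne N 0 with h | h
    · simp [h]; linarith
    · have h2 : ∑ j ∈ Finset.range N, p j ≤ ∑ j ∈ Finset.range N, p j * SA (N - j) := by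
        apply Finset.sum_le_sum
        intro j hj
        have : 1 ≤ SA (N - j) := hSA_ge1 _ (by have := Finset.mem_range.1 hj; omega)
        nlinarith [hp_nonneg j]
      have h3 := hSA_id N
      rw [if_neg h] at h3
      have := hSA_le_f N
      linarith
  have hp_summable : Summable p := summable_of_sum_range_le hp_nonneg hpsum_le
  set P : ℝ := ∑' j, p j with hPdef
  have hSA_tendsto : Filter.Tendsto SA Filter.atTop (nhds f) :=
    htrans.hasSum.tendsto_sum_nat
  have hP_upper : f ≤ 1 + P * f := by
    apply Real.tsum_le_of_sum_range_le ha_nonneg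
    intro N
    have h3 := hSA_id N
    have h4 : ∑ j ∈ Finset.range N, p j * SA (N - j) ≤ P * f := by
      calc ∑ j ∈ Finset.range N, p j * SA (N - j)
          ≤ ∑ j ∈ Finset.range N, p j * f := by
            apply Finset.sum_le_sum
            intro j _
            exact mul_le_mul_of_nonneg_left (hSA_le_f _) (hp_nonneg j)
        _ = (∑ j ∈ Finset.range N, p j) * f := by rw [Finset.sum_mul]
        _ ≤ P * f := by
            apply mul_le_mul_of_nonneg_right _ (by linarith)
            exact Summable.sum_le_tsum _ (fun i _ => hp_nonneg i) hp_summable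
    have h5 : (if N = 0 then (0:ℝ) else 1) ≤ 1 := by split <;> norm_num
    calc SA N = (if N = 0 then (0:ℝ) else 1) + ∑ j ∈ Finset.range N, p j * SA (N - j) := h3
      _ ≤ 1 + P * f := by linarith
  have hP_lower : 1 + P * f ≤ f := by
    have step1 : ∀ K : ℕ, 1 + (∑ j ∈ Finset.range K, p j) * f ≤ f := by
      intro K
      have ev : ∀ᶠ N in Filter.atTop,
          1 + (∑ j ∈ Finset.range K, p j) * SA (N - K) ≤ SA N := by
        filter_upwards [Filter.eventually_ge_atTop (K+1)] with N hN
        have h3 := hSA_id N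
        rw [if_neg (by omega)] at h3
        have h6 : ∑ j ∈ Finset.range K, p j * SA (N - K)
            ≤ ∑ j ∈ Finset.range N, p j * SA (N - j) := by
          calc ∑ j ∈ Finset.range K, p j * SA (N - K)
              ≤ ∑ j ∈ Finset.range K, p j * SA (N - j) := by
                apply Finset.sum_le_sum
                intro j hj
                have hj' := Finset.mem_range.1 hj
                exact mul_le_mul_of_nonneg_left (hSA_mono (by omega)) (hp_nonneg j)
            _ ≤ ∑ j ∈ Finset.range N, p j * SA (N - j) := by
                apply Finset.sum_le_sum_of_subset_of_nonneg
                  (Finset.range_subset_range.2 (by omega))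
                intro i hi _
                exact mul_nonneg (hp_nonneg i)
                  (Finset.sum_nonneg fun l _ => ha_nonneg l)
        rw [← Finset.sum_mul] at h6
        linarith
      have t2 : Filter.Tendsto (fun N => 1 + (∑ j ∈ Finset.range K, p j) * SA (N - K))
          Filter.atTop (nhds (1 + (∑ j ∈ Finset.range K, p j) * f)) := by
        exact (((hSA_tendsto.comp (tendsto_sub_atTop_nat K)).const_mul _).const_add 1)
      exact le_of_tendsto_of_tendsto t2 hSA_tendsto ev
    have t3 : Filter.Tendsto (fun K : ℕ => 1 + (∑ j ∈ Finset.range K, p j) * f)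
        Filter.atTop (nhds (1 + P * f)) :=
      ((hp_summable.hasSum.tendsto_sum_nat).mul_const f).const_add 1
    exact le_of_tendsto t3 (Filter.Eventually.of_forall step1)
  have hPf : P * f = f - 1 := by linarith
  have hσd : σ / d = 1 / f := by
    rw [hσ, div_right_comm, div_self hd0]
  have hPσ : P + σ / d = 1 := by
    rw [hσd]
    have hP' : P = (f - 1)/f := by rw [eq_div_iff hf0]; linarith
    rw [hP', ← add_div, sub_add_cancel, div_self hf0]
    -- r and the h-sequence
  set r : ℕ → ℝ := fun j => Ret A o (H o o) j / d^j with hrdef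
  have hr_nonneg : ∀ j, 0 ≤ r j :=
    fun j => div_nonneg (hRet_nonneg _ (by rw [hHoo]; linarith [hAnn o o]) j) (by positivity)
  have hr0 : r 0 = 0 := by simp [hrdef, Ret_zero]
  have hRet_split : ∀ j, Ret A o (A o o + σ) j
      = Ret A o (A o o) j + (if j = 1 then σ else 0) := by
    intro j
    rcases j with _ | j
    · simp [Ret_zero]
    rcases j with _ | j
    · simp [Ret_one]
    · unfold Ret
      norm_num
  have hr_eq : ∀ j, r j = p j + (if j = 1 then σ / d else 0) := by
    intro j
    rw [hrdef]
    dsimp only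
    rw [hHoo, hRet_split, add_div, hpdef]
    congr 1
    rcases eq_or_ne j 1 with h | h
    · simp [h, pow_one]
    · simp [h]
  have hr_sum_le : ∀ N : ℕ, ∑ j ∈ Finset.range N, r j ≤ 1 := by
    intro N
    have h1 : ∑ j ∈ Finset.range N, r j
        = ∑ j ∈ Finset.range N, p j + ∑ j ∈ Finset.range N, (if j = 1 then σ / d else 0) := by
      rw [← Finset.sum_add_distrib]
      exact Finset.sum_congr rfl fun j _ => hr_eq j
    rw [h1, Finset.sum_ite_eq' (Finset.range N) 1 (fun _ => σ / d)]
    have h2 : ∑ j ∈ Finset.range N, p j ≤ P :=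
      Summable.sum_le_tsum _ (fun i _ => hp_nonneg i) hp_summable
    have h3 : (if 1 ∈ Finset.range N then σ / d else 0) ≤ σ / d := by
      split
      · exact le_refl _
      · exact div_nonneg hσ0 hd.le
    linarith
  have hren_h : ∀ n : ℕ, matPow H n o o / d^n = (if n = 0 then 1 else 0)
      + ∑ j ∈ Finset.range (n+1), r j * (matPow H (n-j) o o / d^(n-j)) :=
    renormR H hHM hHrow
  have hh_nonneg : ∀ n : ℕ, 0 ≤ matPow H n o o / d^n :=
    fun n => div_nonneg (matPow_nonneg hHnn _ _ _) (by positivity)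
  have hh0 : matPow H 0 o o / d^0 = 1 := by simp [matPow_zero]
  have hh_le_one : ∀ n : ℕ, matPow H n o o / d^n ≤ 1 := by
    intro n
    induction n using Nat.strong_induction_on with
    | _ n ih =>
      rcases n with _ | n
      · rw [hh0]
      · rw [hren_h (n+1), if_neg (Nat.succ_ne_zero n), zero_add]
        calc ∑ j ∈ Finset.range (n+2), r j * (matPow H (n+1-j) o o / d^(n+1-j))
            ≤ ∑ j ∈ Finset.range (n+2), r j := by
              apply Finset.sum_le_sum
              intro j hj
              rcases eq_or_ne j 0 with hj0 | hj0
              · subst hj0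
                rw [hr0, zero_mul]
              · exact mul_le_of_le_one_right (hr_nonneg j) (ih (n+1-j) (by omega))
          _ ≤ 1 := hr_sum_le (n+2)
  -- the partial sums of h
  set Sh : ℕ → ℝ := fun N => ∑ k ∈ Finset.range N, matPow H k o o / d^k with hShdef
  have hSh_tendsto : Filter.Tendsto Sh Filter.atTop Filter.atTop :=
    (not_summable_iff_tendsto_nat_atTop_of_nonneg hh_nonneg).1 hns
  have hSh_mono : ∀ ⦃m n : ℕ⦄, m ≤ n → Sh m ≤ Sh n := by
    intro m n hmn
    exact Finset.sum_le_sum_of_subset_of_nonneg (Finset.range_subset_range.2 hmn)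
      (fun i _ _ => hh_nonneg i)
  have hSh_ge1 : ∀ N, 1 ≤ N → 1 ≤ Sh N := by
    intro N hN
    rw [← hh0]
    exact Finset.single_le_sum (fun i _ => hh_nonneg i) (Finset.mem_range.2 (by omega))
  have hSh_diff : ∀ (K N : ℕ), K ≤ N → Sh N ≤ Sh (N - K) + K := by
    intro K N hKN
    have h1 : Sh N - Sh (N - K) = ∑ l ∈ Finset.Ico (N - K) N, matPow H l o o / d^l := by
      rw [Finset.sum_Ico_eq_sub _ (by omega)]
    have h2 : ∑ l ∈ Finset.Ico (N - K) N, matPow H l o o / d^l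
        ≤ (Finset.Ico (N - K) N).card • (1:ℝ) :=
      Finset.sum_le_card_nsmul _ _ 1 (fun l _ => hh_le_one l)
    rw [Nat.card_Ico, nsmul_eq_mul, mul_one] at h2
    have h3 : ((N - (N - K) : ℕ) : ℝ) ≤ (K : ℝ) := by
      exact_mod_cast (by omega : N - (N - K) ≤ K)
    linarith
  -- numerator
  have hNum : ∀ n : ℕ, ∑ k ∈ Finset.range n, matPow H k o x / d^k
      = ∑ j ∈ Finset.range n, firstHit A d o x j * Sh (n - j) := by
    intro n
    have h1 : ∑ k ∈ Finset.range n, matPow H k o x / d^k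
        = ∑ k ∈ Finset.range n, ∑ j ∈ Finset.range (k+1),
            firstHit A d o x j * (matPow H (k-j) o o / d^(k-j)) :=
      Finset.sum_congr rfl fun k _ => part1 k
    rw [h1]
    exact conv_sum (firstHit A d o x) (fun l => matPow H l o o / d^l) n
  set Q : ℝ := ∑' l, firstHit A d o x l with hQdef
  have hQ_partial : ∀ N, ∑ j ∈ Finset.range N, firstHit A d o x j ≤ Q :=
    fun N => Summable.sum_le_tsum _ (fun i _ => hq_nonneg i) hq_summable
  -- the limit
  have hTendsto : Filter.Tendsto (fun n : ℕ =>
      (∑ k ∈ Finset.range n, matPow H k o x / d^k)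
        / (∑ k ∈ Finset.range n, matPow H k o o / d^k))
      Filter.atTop (nhds Q) := by
    rw [tendsto_order]
    constructor
    · -- lower bound
      intro c hc
      obtain ⟨K, hK⟩ : ∃ K, c < ∑ j ∈ Finset.range K, firstHit A d o x j :=
        (hq_summable.hasSum.tendsto_sum_nat.eventually (eventually_gt_nhds hc)).exists
      set cK := ∑ j ∈ Finset.range K, firstHit A d o x j with hcKdef
      have hcK_nonneg : 0 ≤ cK := Finset.sum_nonneg fun i _ => hq_nonneg i
      have t0 : Filter.Tendsto (fun n : ℕ => (Sh n)⁻¹) Filter.atTop (nhds 0) :=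
        tendsto_inv_atTop_zero.comp hSh_tendsto
      have t1 : Filter.Tendsto (fun n : ℕ => cK * (1 - (K : ℝ) * (Sh n)⁻¹))
          Filter.atTop (nhds (cK * (1 - (K : ℝ) * 0))) :=
        (((t0.const_mul (K : ℝ)).const_sub 1).const_mul cK)
      have hlim : cK * (1 - (K : ℝ) * 0) = cK := by ring
      rw [hlim] at t1
      have ev1 : ∀ᶠ n : ℕ in Filter.atTop, c < cK * (1 - (K : ℝ) * (Sh n)⁻¹) :=
        t1.eventually (eventually_gt_nhds hK)
      filter_upwards [ev1, Filter.eventually_ge_atTop (K+1)] with n hn1 hn2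
      have hShn : 0 < Sh n := lt_of_lt_of_le one_pos (hSh_ge1 n (by omega))
      have step1 : cK * (1 - (K : ℝ) * (Sh n)⁻¹)
          ≤ (∑ k ∈ Finset.range n, matPow H k o x / d^k) / Sh n := by
        rw [le_div_iff₀ hShn]
        have e1 : cK * (1 - (K : ℝ) * (Sh n)⁻¹) * Sh n = cK * (Sh n - K) := by
          field_simp
        rw [e1]
        have e2 : cK * (Sh n - (K:ℝ)) ≤ cK * Sh (n - K) := by
          apply mul_le_mul_of_nonneg_left _ hcK_nonneg
          have := hSh_diff K n (by omega)
          linarith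
        have e3 : cK * Sh (n - K) ≤ ∑ j ∈ Finset.range n, firstHit A d o x j * Sh (n - j) := by
          rw [hcKdef, Finset.sum_mul]
          calc ∑ j ∈ Finset.range K, firstHit A d o x j * Sh (n - K)
              ≤ ∑ j ∈ Finset.range K, firstHit A d o x j * Sh (n - j) := by
                apply Finset.sum_le_sum
                intro j hj
                have hj' := Finset.mem_range.1 hj
                exact mul_le_mul_of_nonneg_left (hSh_mono (by omega)) (hq_nonneg j)
            _ ≤ ∑ j ∈ Finset.range n, firstHit A d o x j * Sh (n - j) := by
                apply Finset.sum_le_sum_of_subset_of_nonneg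
                  (Finset.range_subset_range.2 (by omega))
                intro i _ _
                apply mul_nonneg (hq_nonneg i)
                exact Finset.sum_nonneg fun l _ => hh_nonneg l
        rw [hNum n]
        linarith
      exact lt_of_lt_of_le hn1 step1
    · -- upper bound
      intro c hc
      filter_upwards [Filter.eventually_ge_atTop 1] with n hn
      have hShn : 0 < Sh n := lt_of_lt_of_le one_pos (hSh_ge1 n hn)
      have hub : (∑ k ∈ Finset.range n, matPow H k o x / d^k) / Sh n ≤ Q := by
        rw [div_le_iff₀ hShn, hNum n]
        calc ∑ j ∈ Finset.range n, firstHit A d o x j * Sh (n - j)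
            ≤ ∑ j ∈ Finset.range n, firstHit A d o x j * Sh n := by
              apply Finset.sum_le_sum
              intro j _
              exact mul_le_mul_of_nonneg_left (hSh_mono (by omega)) (hq_nonneg j)
          _ = (∑ j ∈ Finset.range n, firstHit A d o x j) * Sh n := by
              rw [Finset.sum_mul]
          _ ≤ Q * Sh n :=
              mul_le_mul_of_nonneg_right (hQ_partial n) hShn.le
      exact lt_of_le_of_lt hub hc
  -- the value of the limit
  have part1A := part1gen A hloc hAsymm (fun _ _ _ => rfl)
  have hprod : Summable (fun z : ℕ × ℕ =>
      firstHit A d o x z.1 * (matPow A z.2 o o / d^z.2)) :=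
    hq_summable.mul_of_nonneg htrans hq_nonneg ha_nonneg
  have hC := Summable.tsum_mul_tsum_eq_tsum_sum_range hq_summable htrans hprod
  have hCc : ∀ n : ℕ, ∑ k ∈ Finset.range (n+1),
      firstHit A d o x k * (matPow A (n-k) o o / d^(n-k)) = matPow A n o x / d^n :=
    fun n => (part1A n).symm
  rw [tsum_congr hCc] at hC
  have hQval : Q = (∑' n : ℕ, matPow A n o x / d^n) / f := by
    rw [eq_div_iff hf0]
    exact hC
  exact ⟨hq_summable, hTendsto, hQval⟩
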